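/- Conditional distribution of conformal p-value CDF is Beta: Let T_1, ..., T_n be i.i.d. from a continuous distribution (the calibration scores), and let Q̂(x) = (1 + |{j : T_j ≥ x}|)/(n+1) for a fresh independent test score X with the same distribution. Then for a fixed level t with a = ⌊(n+1)t⌋ ≥ 1, the conditional probability P(Q̂(X) ≤ t | T_1,...,T_n) is distributed as Beta(a, n+1−a). -/

import Mathlib

open MeasureTheory

/-- The Beta(a,b) distribution on ℝ, as a measure with the usual density on (0,1). -/
noncomputable def betaMeasure (a b : ℝ) : Measure ℝ :=
  (volume.restrict (Set.Ioo (0:ℝ) 1)).withDensity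
    (fun x => ENNReal.ofReal
      (x ^ (a - 1) * (1 - x) ^ (b - 1) * (Real.Gamma (a + b) / (Real.Gamma a * Real.Gamma b))))

open scoped ENNReal
open Set


lemma Fmono (ν : Measure ℝ) [IsProbabilityMeasure ν] :
    Monotone (fun y => (ν (Set.Iic y)).toReal) := fun y z hyz =>
  ENNReal.toReal_mono (measure_ne_top ν _) (measure_mono (Set.Iic_subset_Iic.2 hyz))

lemma inv_succ_le_inv_succ {i j : ℕ} (h : i ≤ j) : (1:ℝ)/(j+1) ≤ 1/(i+1) := by
  apply one_div_le_one_div_of_le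
  · positivity
  · push_cast; have := (Nat.cast_le (α := ℝ)).2 h; linarith

lemma measA {ν : Measure ℝ} [IsProbabilityMeasure ν]
    (hcont : ∀ x : ℝ, ν {x} = 0) {s : ℝ} (h0 : 0 ≤ s) (h1 : s ≤ 1) :
    ν {y | (ν (Set.Iic y)).toReal < s} = ENNReal.ofReal s := by
  set F := fun y => (ν (Set.Iic y)).toReal with hF
  set A := {y | F y < s} with hA
  have hlow : ∀ ⦃y z : ℝ⦄, y ≤ z → z ∈ A → y ∈ A := fun y z hyz hz =>
    lt_of_le_of_lt (Fmono ν hyz) hz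
  have hIioIic : ∀ c : ℝ, ν (Set.Iio c) = ν (Set.Iic c) := by
    intro c
    refine le_antisymm (measure_mono Set.Iio_subset_Iic_self) ?_
    calc ν (Set.Iic c) ≤ ν (Set.Iio c ∪ {c}) := measure_mono (fun y hy => by
          rcases lt_or_eq_of_le (Set.mem_Iic.1 hy) with h | h
          · exact Or.inl h
          · exact Or.inr (by simp [h]))
      _ ≤ ν (Set.Iio c) + ν {c} := measure_union_le _ _
      _ = ν (Set.Iio c) := by rw [hcont c, add_zero]
  rcases eq_empty_or_nonempty A with hAe | hAne
  · have hs0 : s ≤ 0 := by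
      by_contra hs
      push_neg at hs
      have hall : ∀ y : ℝ, ENNReal.ofReal s ≤ ν (Set.Iic y) := by
        intro y
        have hy : s ≤ F y := le_of_not_gt (eq_empty_iff_forall_notMem.1 hAe y)
        exact (ENNReal.ofReal_le_iff_le_toReal (measure_ne_top ν _)).2 hy
      have hint : (⋂ n : ℕ, Set.Iic (-(n:ℝ))) = (∅ : Set ℝ) := by
        ext y
        simp only [Set.mem_iInter, Set.mem_Iic, Set.mem_empty_iff_false, iff_false, not_forall]
        obtain ⟨m, hm⟩ := exists_nat_gt (-y)
        exact ⟨m, by push_neg; linarith⟩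
      have hd : Directed (· ⊇ ·) (fun n : ℕ => Set.Iic (-(n:ℝ))) := fun i j =>
        ⟨max i j, Set.Iic_subset_Iic.2 (by simp), Set.Iic_subset_Iic.2 (by simp)⟩
      have hmi := Directed.measure_iInter (μ := ν)
        (fun n : ℕ => measurableSet_Iic.nullMeasurableSet) hd ⟨0, measure_ne_top ν _⟩
      rw [hint, measure_empty] at hmi
      have hcontra : ENNReal.ofReal s ≤ 0 := hmi ▸ le_iInf fun n => hall _
      exact (ENNReal.ofReal_pos.2 hs).not_ge hcontra
    rw [hAe, measure_empty, le_antisymm hs0 h0, ENNReal.ofReal_zero]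
  · by_cases hbdd : BddAbove A
    · set c := sSup A with hc
      have hsub1 : Set.Iio c ⊆ A := fun y hy => by
        obtain ⟨z, hzA, hyz⟩ := exists_lt_of_lt_csSup hAne hy
        exact hlow hyz.le hzA
      have hsub2 : A ⊆ Set.Iic c := fun y hy => le_csSup hbdd hy
      have hle : ν (Set.Iio c) ≤ ENNReal.ofReal s := by
        have hun : Set.Iio c = ⋃ n : ℕ, Set.Iic (c - 1/(n+1)) := by
          ext y
          simp only [Set.mem_Iio, Set.mem_iUnion, Set.mem_Iic]
          constructor
          · intro hy
            obtain ⟨m, hm⟩ := exists_nat_one_div_lt (show (0:ℝ) < c - y by linarith)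
            exact ⟨m, by push_cast at hm ⊢; linarith⟩
          · intro ⟨n, hn⟩
            have hp : (0:ℝ) < 1/(n+1) := by positivity
            linarith
        have hd : Directed (· ⊆ ·) (fun n : ℕ => Set.Iic (c - 1/(n+1))) := fun i j => by
          refine ⟨max i j, Set.Iic_subset_Iic.2 (by linarith [inv_succ_le_inv_succ (le_max_left i j)]), Set.Iic_subset_Iic.2 (by linarith [inv_succ_le_inv_succ (le_max_right i j)])⟩
        rw [hun, Directed.measure_iUnion hd]
        refine iSup_le fun n => ?_
        have hmem : (c - 1/(n+1)) ∈ A := hsub1 (by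
          simp only [Set.mem_Iio]
          have hp : (0:ℝ) < 1/(n+1) := by positivity
          linarith)
        exact le_of_lt ((ENNReal.lt_ofReal_iff_toReal_lt (measure_ne_top ν _)).2 hmem)
      have hge : ENNReal.ofReal s ≤ ν (Set.Iic c) := by
        have hint : Set.Iic c = ⋂ n : ℕ, Set.Iic (c + 1/(n+1)) := by
          ext y
          simp only [Set.mem_Iic, Set.mem_iInter]
          constructor
          · intro hy n
            have hp : (0:ℝ) < 1/(n+1) := by positivity
            linarith
          · intro h
            by_contra hy
            push_neg at hy
            obtain ⟨m, hm⟩ := exists_nat_one_div_lt (show (0:ℝ) < y - c by linarith)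
            have := h m
            push_cast at hm
            linarith
        have hd : Directed (· ⊇ ·) (fun n : ℕ => Set.Iic (c + 1/(n+1))) := fun i j => by
          refine ⟨max i j, Set.Iic_subset_Iic.2 (by linarith [inv_succ_le_inv_succ (le_max_left i j)]), Set.Iic_subset_Iic.2 (by linarith [inv_succ_le_inv_succ (le_max_right i j)])⟩
        rw [hint, Directed.measure_iInter (fun n : ℕ => measurableSet_Iic.nullMeasurableSet) hd
          ⟨0, measure_ne_top ν _⟩]
        refine le_iInf fun n => ?_
        have hnotA : (c + 1/(n+1)) ∉ A := fun hmem => by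
          have := le_csSup hbdd hmem
          have hp : (0:ℝ) < 1/(n+1) := by positivity
          rw [← hc] at this
          linarith
        have hy : s ≤ F (c + 1/(n+1)) := le_of_not_gt hnotA
        exact (ENNReal.ofReal_le_iff_le_toReal (measure_ne_top ν _)).2 hy
      refine le_antisymm ?_ ?_
      · exact le_trans (measure_mono hsub2) (le_trans (hIioIic c).symm.le hle)
      · exact le_trans hge (le_trans (hIioIic c).ge (measure_mono hsub1))
    · -- A unbounded above: A = univ and s = 1
      have hAuniv : A = Set.univ := by
        ext y
        simp only [Set.mem_univ, iff_true]
        obtain ⟨z, hzA, hyz⟩ := not_bddAbove_iff.1 hbdd y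
        exact hlow hyz.le hzA
      have hs1 : 1 ≤ s := by
        have htend := tendsto_measure_Iic_atTop ν
        rw [measure_univ] at htend
        have htend' : Filter.Tendsto F Filter.atTop (nhds 1) := by
          have h2 := (ENNReal.tendsto_toReal ENNReal.one_ne_top).comp htend
          exact h2
        refine le_of_tendsto htend' (Filter.Eventually.of_forall fun y => ?_)
        exact le_of_lt (by exact (hAuniv ▸ Set.mem_univ y : y ∈ A))
      rw [hAuniv, le_antisymm h1 hs1]
      simp

open Classical in
lemma eventEqUnion (n : ℕ) (A : Set ℝ) (i : ℕ) :
    {T : Fin n → ℝ | (Finset.univ.filter (fun j => T j ∈ A)).card = i} =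
      ⋃ s ∈ Finset.univ.powersetCard i, Set.pi Set.univ
        (fun j : Fin n => if j ∈ s then A else Aᶜ) := by
  ext T
  simp only [Set.mem_setOf_eq, Set.mem_iUnion, Set.mem_pi, Set.mem_univ, true_implies,
    Finset.mem_powersetCard, exists_prop]
  constructor
  · intro hcard
    refine ⟨Finset.univ.filter (fun j => T j ∈ A), ⟨Finset.filter_subset _ _ |>.trans
      (by simp), hcard⟩, fun j => ?_⟩
    by_cases hj : T j ∈ A <;> simp [hj]
  · rintro ⟨s, ⟨-, hcard⟩, hs⟩
    rw [← hcard]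
    congr 1
    ext j
    simp only [Finset.mem_filter, Finset.mem_univ, true_and]
    constructor
    · intro hj
      by_contra hjs
      have := hs j
      rw [if_neg hjs] at this
      exact this hj
    · intro hj
      have := hs j
      rwa [if_pos hj] at this

open Classical in
lemma binomCount (n : ℕ) (ν : Measure ℝ) [IsProbabilityMeasure ν] {A : Set ℝ}
    (hA : MeasurableSet A) (i : ℕ) :
    (Measure.pi fun _ : Fin n => ν)
        {T : Fin n → ℝ | (Finset.univ.filter (fun j => T j ∈ A)).card = i} =
      (n.choose i) * (ν A)^i * (ν Aᶜ)^(n-i) := by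
  rw [eventEqUnion]
  rw [measure_biUnion_finset]
  · have hmeas : ∀ s ∈ Finset.univ.powersetCard i, (Measure.pi fun _ : Fin n => ν)
        (Set.pi Set.univ (fun j : Fin n => if j ∈ s then A else Aᶜ)) =
        (ν A)^i * (ν Aᶜ)^(n-i) := by
      intro s hs
      rw [Measure.pi_pi]
      have : ∀ j : Fin n, ν (if j ∈ s then A else Aᶜ) = if j ∈ s then ν A else ν Aᶜ := by
        intro j; split <;> rfl
      rw [Finset.prod_congr rfl (fun j _ => this j), Finset.prod_ite, Finset.prod_const,
        Finset.prod_const, Finset.filter_mem_eq_inter, Finset.univ_inter]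
      have hcard : s.card = i := (Finset.mem_powersetCard.1 hs).2
      congr 1
      · rw [hcard]
      · congr 1
        rw [Finset.filter_not, Finset.filter_mem_eq_inter, Finset.univ_inter,
          Finset.card_sdiff_of_subset (Finset.subset_univ s), Finset.card_univ, Fintype.card_fin, hcard]
    rw [Finset.sum_congr rfl hmeas, Finset.sum_const, Finset.card_powersetCard,
      Finset.card_univ, Fintype.card_fin, nsmul_eq_mul, mul_assoc]
  · -- pairwise disjoint
    intro s hs u hu hsu
    simp only [Function.onFun]
    apply Set.disjoint_left.2
    intro T hTs hTu
    apply hsu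
    ext j
    have h1 := Set.mem_pi.1 hTs j (Set.mem_univ j)
    have h2 := Set.mem_pi.1 hTu j (Set.mem_univ j)
    constructor
    · intro hjs
      rw [if_pos hjs] at h1
      by_contra hju
      rw [if_neg hju] at h2
      exact h2 h1
    · intro hju
      rw [if_pos hju] at h2
      by_contra hjs
      rw [if_neg hjs] at h1
      exact h1 h2
  · intro s hs
    exact MeasurableSet.univ_pi (fun j => by split <;> [exact hA; exact hA.compl])

open Classical in
lemma binomLeCount (n : ℕ) (ν : Measure ℝ) [IsProbabilityMeasure ν] {A : Set ℝ}
    (hA : MeasurableSet A) (m : ℕ) :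
    (Measure.pi fun _ : Fin n => ν)
        {T : Fin n → ℝ | (Finset.univ.filter (fun j => T j ∈ A)).card ≤ m} =
      ∑ i ∈ Finset.range (m+1), (n.choose i) * (ν A)^i * (ν Aᶜ)^(n-i) := by
  have hset : {T : Fin n → ℝ | (Finset.univ.filter (fun j => T j ∈ A)).card ≤ m} =
      ⋃ i ∈ Finset.range (m+1),
        {T : Fin n → ℝ | (Finset.univ.filter (fun j => T j ∈ A)).card = i} := by
    ext T
    simp only [Set.mem_setOf_eq, Set.mem_iUnion, Finset.mem_range, exists_prop]
    exact ⟨fun h => ⟨_, Nat.lt_succ_of_le h, rfl⟩, fun ⟨i, hi, he⟩ => he ▸ Nat.lt_succ_iff.1 hi⟩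
  rw [hset, measure_biUnion_finset]
  · exact Finset.sum_congr rfl fun i _ => binomCount n ν hA i
  · intro i hi j hj hij
    simp only [Function.onFun]
    apply Set.disjoint_left.2
    intro T hTi hTj
    exact hij (hTi.symm.trans hTj)
  · intro i hi
    rw [eventEqUnion]
    exact MeasurableSet.biUnion (Finset.countable_toSet _) (fun s _ =>
      MeasurableSet.univ_pi (fun j => by split <;> [exact hA; exact hA.compl]))

noncomputable def osup (n : ℕ) (T : Fin n → ℝ) (s : Finset (Fin n)) : ℝ :=
  if h : s.Nonempty then s.sup' h T else 0

noncomputable def kth (n k : ℕ) (T : Fin n → ℝ) : ℝ :=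
  if h : (Finset.univ.powersetCard k (α := Fin n)).Nonempty
  then (Finset.univ.powersetCard k).inf' h (osup n T) else 0

lemma measurable_kth (n k : ℕ) : Measurable (kth n k) := by
  unfold kth
  split
  · next h =>
    have : (fun T => (Finset.univ.powersetCard k).inf' h (osup n T)) =
        (Finset.univ.powersetCard k).inf' h (fun s T => osup n T s) := by
      funext T
      rw [Finset.inf'_apply]
    rw [show (fun T => (Finset.univ.powersetCard k (α := Fin n)).inf' h (osup n T)) =
        (Finset.univ.powersetCard k).inf' h (fun s T => osup n T s) from this]
    apply Finset.inf'_induction (p := fun g : (Fin n → ℝ) → ℝ => Measurable g)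
    · exact fun _f hf _g hg => hf.inf hg
    · intro s hs
      unfold osup
      split
      · next hne =>
        have : (fun T : Fin n → ℝ => s.sup' hne T) = s.sup' hne (fun j T => T j) := by
          funext T; rw [Finset.sup'_apply]
        rw [this]
        exact Finset.measurable_sup' hne (fun j _ => measurable_pi_apply j)
      · exact measurable_const
  · exact measurable_const

lemma kth_lt_iff {n k : ℕ} (hk1 : 1 ≤ k) (hkn : k ≤ n) (T : Fin n → ℝ)
    (G : ℝ → ℝ) (hG : Monotone G) (s : ℝ) :
    G (kth n k T) < s ↔ k ≤ (Finset.univ.filter (fun j => G (T j) < s)).card := by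
  have hne : (Finset.univ.powersetCard k (α := Fin n)).Nonempty :=
    Finset.powersetCard_nonempty.2 (by simpa using hkn)
  rw [kth, dif_pos hne]
  constructor
  · intro hlt
    obtain ⟨s0, hs0mem, hs0eq⟩ := Finset.exists_mem_eq_inf' hne (osup n T)
    obtain ⟨hs0sub, hs0card⟩ := Finset.mem_powersetCard.1 hs0mem
    have hs0ne : s0.Nonempty := Finset.card_pos.1 (hs0card ▸ hk1)
    have hsub : s0 ⊆ Finset.univ.filter (fun j => G (T j) < s) := by
      intro j hj
      simp only [Finset.mem_filter, Finset.mem_univ, true_and]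
      have hTj : T j ≤ osup n T s0 := by
        rw [osup, dif_pos hs0ne]
        exact Finset.le_sup' T hj
      calc G (T j) ≤ G (osup n T s0) := hG hTj
        _ = G ((Finset.univ.powersetCard k).inf' hne (osup n T)) := by rw [hs0eq]
        _ < s := hlt
    calc k = s0.card := hs0card.symm
      _ ≤ _ := Finset.card_le_card hsub
  · intro hcard
    obtain ⟨s1, hs1sub, hs1card⟩ := Finset.exists_subset_card_eq hcard
    have hs1ne : s1.Nonempty := Finset.card_pos.1 (hs1card ▸ hk1)
    have hs1mem : s1 ∈ Finset.univ.powersetCard k :=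
      Finset.mem_powersetCard.2 ⟨Finset.subset_univ s1, hs1card⟩
    obtain ⟨j1, hj1, hj1eq⟩ := Finset.exists_mem_eq_sup' hs1ne T
    have h1 : (Finset.univ.powersetCard k).inf' hne (osup n T) ≤ T j1 := by
      calc (Finset.univ.powersetCard k).inf' hne (osup n T) ≤ osup n T s1 :=
            Finset.inf'_le _ hs1mem
        _ = T j1 := by rw [osup, dif_pos hs1ne, hj1eq]
    have := hs1sub hj1
    simp only [Finset.mem_filter, Finset.mem_univ, true_and] at this
    exact lt_of_le_of_lt (hG h1) this

noncomputable def gpoly (n a : ℕ) (x : ℝ) : ℝ :=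
  ∑ j ∈ Finset.Icc a n, (n.choose j : ℝ) * x^j * (1-x)^(n-j)

noncomputable def hterm (n : ℕ) (j : ℕ) (x : ℝ) : ℝ :=
  (j : ℝ) * (n.choose j : ℝ) * x^(j-1) * (1-x)^(n-j)

lemma hasDerivAt_term (n j : ℕ) (hj1 : 1 ≤ j) (hjn : j ≤ n) (x : ℝ) :
    HasDerivAt (fun x => (n.choose j : ℝ) * x^j * (1-x)^(n-j))
      (hterm n j x - hterm n (j+1) x) x := by
  have h1 : HasDerivAt (fun x : ℝ => x ^ j) ((j:ℝ) * x^(j-1)) x := hasDerivAt_pow j x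
  have h2 : HasDerivAt (fun x : ℝ => (1-x)^(n-j))
      (((n-j : ℕ):ℝ) * (1-x)^(n-j-1) * (-1)) x := by
    have hinner : HasDerivAt (fun x : ℝ => 1 - x) (-1) x := by
      simpa using (hasDerivAt_id x).const_sub 1
    exact (hasDerivAt_pow (n-j) (1-x)).comp x hinner
  have h3 := (h1.mul h2).const_mul ((n.choose j : ℝ))
  have h3' : HasDerivAt (fun x => (n.choose j : ℝ) * x^j * (1-x)^(n-j))
      ((n.choose j : ℝ) * ((j:ℝ) * x^(j-1) * (1-x)^(n-j) +
        x^j * (((n-j : ℕ):ℝ) * (1-x)^(n-j-1) * (-1)))) x := by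
    simpa [mul_assoc] using h3
  convert h3' using 1
  have hchoose : ((n.choose (j+1) : ℝ)) * ((j:ℝ)+1) = (n.choose j : ℝ) * ((n-j:ℕ):ℝ) := by
    exact_mod_cast congrArg (Nat.cast : ℕ → ℝ) (Nat.choose_succ_right_eq n j)
  unfold hterm
  have hj : j + 1 - 1 = j := rfl
  rw [hj]
  have hexp : n - (j+1) = n - j - 1 := by omega
  rw [hexp]
  push_cast at hchoose ⊢
  linear_combination (-(x^j * (1-x)^(n-j-1))) * hchoose

lemma hasDerivAt_gpoly (n a : ℕ) (ha1 : 1 ≤ a) (han : a ≤ n) (x : ℝ) :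
    HasDerivAt (gpoly n a) (hterm n a x) x := by
  have hsum : HasDerivAt (gpoly n a)
      (∑ j ∈ Finset.Icc a n, (hterm n j x - hterm n (j+1) x)) x := by
    apply HasDerivAt.fun_sum
    intro j hj
    obtain ⟨hja, hjn⟩ := Finset.mem_Icc.1 hj
    exact hasDerivAt_term n j (le_trans ha1 hja) hjn x
  convert hsum using 1
  have : Finset.Icc a n = Finset.Ico a (n+1) := by rw [Finset.Ico_add_one_right_eq_Icc]
  rw [this, Finset.sum_Ico_eq_sum_range]
  have := Finset.sum_range_sub' (fun i => hterm n (a + i) x) (n + 1 - a)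
  simp only [add_zero] at this
  have harr : ∀ i, a + i + 1 = a + (i+1) := fun i => by omega
  calc hterm n a x = hterm n a x - hterm n (a + (n+1-a)) x := by
        have : a + (n+1-a) = n+1 := by omega
        rw [this]
        have hz : hterm n (n+1) x = 0 := by
          unfold hterm
          rw [Nat.choose_eq_zero_of_lt (by omega)]
          simp
        rw [hz, sub_zero]
    _ = ∑ i ∈ Finset.range (n+1-a), (hterm n (a+i) x - hterm n (a+(i+1)) x) := this.symm
    _ = ∑ i ∈ Finset.range (n+1-a), (hterm n (a+i) x - hterm n (a+i+1) x) := by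
        refine Finset.sum_congr rfl fun i _ => by rw [harr i]

lemma continuous_hterm (n a : ℕ) : Continuous (hterm n a) := by
  unfold hterm
  fun_prop

lemma gpoly_zero (n a : ℕ) (ha1 : 1 ≤ a) : gpoly n a 0 = 0 := by
  unfold gpoly
  refine Finset.sum_eq_zero fun j hj => ?_
  have hja := (Finset.mem_Icc.1 hj).1
  rw [zero_pow (by omega)]
  ring

lemma integral_gpoly (n a : ℕ) (ha1 : 1 ≤ a) (han : a ≤ n) {p : ℝ} (hp0 : 0 ≤ p) :
    ∫ x in Set.Ioo (0:ℝ) p, hterm n a x = gpoly n a p := by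
  rw [← MeasureTheory.integral_Ioc_eq_integral_Ioo, ← intervalIntegral.integral_of_le hp0]
  rw [intervalIntegral.integral_eq_sub_of_hasDerivAt
    (fun x _ => hasDerivAt_gpoly n a ha1 han x)
    ((continuous_hterm n a).intervalIntegrable 0 p)]
  rw [gpoly_zero n a ha1, sub_zero]

lemma density_eq (n a : ℕ) (ha1 : 1 ≤ a) (han : a ≤ n) (x : ℝ) :
    x ^ ((a:ℝ) - 1) * (1 - x) ^ (((n:ℝ) + 1 - (a:ℝ)) - 1) *
      (Real.Gamma ((a:ℝ) + ((n:ℝ) + 1 - (a:ℝ))) /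
        (Real.Gamma (a:ℝ) * Real.Gamma ((n:ℝ) + 1 - (a:ℝ)))) = hterm n a x := by
  have e1 : (a:ℝ) - 1 = ((a - 1 : ℕ) : ℝ) := by
    push_cast [Nat.cast_sub ha1]; ring
  have e2 : ((n:ℝ) + 1 - (a:ℝ)) - 1 = ((n - a : ℕ) : ℝ) := by
    push_cast [Nat.cast_sub han]; ring
  have e3 : (a:ℝ) + ((n:ℝ) + 1 - (a:ℝ)) = ((n:ℕ):ℝ) + 1 := by ring
  have e4 : (a:ℝ) = ((a-1 : ℕ):ℝ) + 1 := by push_cast [Nat.cast_sub ha1]; ring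
  have e5 : ((n:ℝ) + 1 - (a:ℝ)) = ((n-a : ℕ):ℝ) + 1 := by push_cast [Nat.cast_sub han]; ring
  have g1 : Real.Gamma ((a:ℝ)) = (a-1).factorial := by rw [e4, Real.Gamma_nat_eq_factorial]
  have g2 : Real.Gamma ((n:ℝ)+1-(a:ℝ)) = (n-a).factorial := by
    rw [e5, Real.Gamma_nat_eq_factorial]
  have g3 : Real.Gamma ((a:ℝ)+((n:ℝ)+1-(a:ℝ))) = n.factorial := by
    rw [e3, Real.Gamma_nat_eq_factorial]
  rw [e1, e2, Real.rpow_natCast, Real.rpow_natCast, g1, g2, g3]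
  unfold hterm
  rw [Nat.cast_choose ℝ han]
  have hfa : (a.factorial : ℝ) = (a:ℝ) * ((a-1).factorial : ℝ) := by
    have : a = (a - 1) + 1 := by omega
    rw [this, Nat.factorial_succ]
    push_cast [Nat.cast_sub ha1]
    ring_nf
  rw [hfa]
  have h1 : ((a-1).factorial : ℝ) ≠ 0 := Nat.cast_ne_zero.2 (Nat.factorial_ne_zero _)
  have h2 : ((n-a).factorial : ℝ) ≠ 0 := Nat.cast_ne_zero.2 (Nat.factorial_ne_zero _)
  have h3 : (a:ℝ) ≠ 0 := Nat.cast_ne_zero.2 (by omega)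
  field_simp

lemma betaIic_nonneg (n a : ℕ) (ha1 : 1 ≤ a) (han : a ≤ n) {q : ℝ} (hq : 0 ≤ q) :
    betaMeasure a ((n:ℝ) + 1 - a) (Set.Iic q) = ENNReal.ofReal (gpoly n a (min q 1)) := by
  set p := min q 1 with hp
  have hp0 : 0 ≤ p := le_min hq zero_le_one
  have hp1 : p ≤ 1 := min_le_right _ _
  unfold betaMeasure
  rw [withDensity_apply _ measurableSet_Iic, Measure.restrict_restrict measurableSet_Iic]
  have hae : (Set.Iic q ∩ Set.Ioo (0:ℝ) 1 : Set ℝ) =ᵐ[volume] Set.Ioo (0:ℝ) p := by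
    rw [Filter.eventuallyEq_set]
    apply MeasureTheory.ae_iff.2
    have hsub : {x : ℝ | ¬(x ∈ Set.Iic q ∩ Set.Ioo (0:ℝ) 1 ↔ x ∈ Set.Ioo 0 p)} ⊆ {p} := by
      intro x hx
      simp only [Set.mem_setOf_eq, Set.mem_inter_iff, Set.mem_Iic, Set.mem_Ioo,
        Set.mem_singleton_iff] at hx ⊢
      by_contra hne
      apply hx
      constructor
      · rintro ⟨hxq, hx0, hx1⟩
        refine ⟨hx0, ?_⟩
        rcases lt_or_ge x p with h | h
        · exact h
        · exfalso; apply hne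
          rcases min_cases q 1 with ⟨he, hc⟩ | ⟨he, hc⟩ <;> rw [← hp] at he
          · exact le_antisymm (he ▸ hxq) h
          · exfalso; rw [← he] at hx1; exact absurd hx1 (not_lt.2 h)
      · rintro ⟨hx0, hxp⟩
        exact ⟨le_trans hxp.le (min_le_left q 1), hx0, lt_of_lt_of_le hxp hp1⟩
    exact measure_mono_null hsub (measure_singleton p)
  rw [Measure.restrict_congr_set hae]
  have hdens : ∀ x : ℝ, ENNReal.ofReal
      (x ^ ((a:ℝ) - 1) * (1 - x) ^ (((n:ℝ) + 1 - (a:ℝ)) - 1) *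
        (Real.Gamma ((a:ℝ) + ((n:ℝ) + 1 - (a:ℝ))) /
          (Real.Gamma (a:ℝ) * Real.Gamma ((n:ℝ) + 1 - (a:ℝ))))) =
      ENNReal.ofReal (hterm n a x) := fun x => by rw [density_eq n a ha1 han x]
  calc ∫⁻ x in Set.Ioo (0:ℝ) p, ENNReal.ofReal
        (x ^ ((a:ℝ) - 1) * (1 - x) ^ (((n:ℝ) + 1 - (a:ℝ)) - 1) *
          (Real.Gamma ((a:ℝ) + ((n:ℝ) + 1 - (a:ℝ))) /
            (Real.Gamma (a:ℝ) * Real.Gamma ((n:ℝ) + 1 - (a:ℝ))))) ∂volume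
      = ∫⁻ x in Set.Ioo (0:ℝ) p, ENNReal.ofReal (hterm n a x) ∂volume := by
        exact lintegral_congr fun x => hdens x
    _ = ENNReal.ofReal (∫ x in Set.Ioo (0:ℝ) p, hterm n a x ∂volume) := by
        rw [MeasureTheory.ofReal_integral_eq_lintegral_ofReal]
        · exact ((continuous_hterm n a).integrableOn_Icc).mono_set Set.Ioo_subset_Icc_self
        · apply (MeasureTheory.ae_restrict_iff' measurableSet_Ioo).2
          apply Filter.Eventually.of_forall
          intro x hx
          unfold hterm
          have h1 : (0:ℝ) ≤ x := hx.1.le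
          have h2 : (0:ℝ) ≤ 1 - x := by
            have := hx.2
            have : x < 1 := lt_of_lt_of_le this hp1
            linarith
          positivity
    _ = ENNReal.ofReal (gpoly n a p) := by rw [integral_gpoly n a ha1 han hp0]

lemma betaIic_neg (n a : ℕ) {q : ℝ} (hq : q < 0) :
    betaMeasure a ((n:ℝ) + 1 - a) (Set.Iic q) = 0 := by
  unfold betaMeasure
  rw [withDensity_apply _ measurableSet_Iic, Measure.restrict_restrict measurableSet_Iic]
  have : (Set.Iic q ∩ Set.Ioo (0:ℝ) 1 : Set ℝ) = ∅ := by
    ext x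
    simp only [Set.mem_inter_iff, Set.mem_Iic, Set.mem_Ioo, Set.mem_empty_iff_false, iff_false,
      not_and]
    intro h1 h2
    linarith
  rw [this, Measure.restrict_empty, lintegral_zero_measure]

lemma bridge (n a : ℕ) (ha1 : 1 ≤ a) (han : a ≤ n) {v : ℝ} (h0 : 0 ≤ v) (h1 : v ≤ 1) :
    ENNReal.ofReal (gpoly n a v) =
      ∑ i ∈ Finset.range (n-a+1), (n.choose i : ℝ≥0∞) *
        (ENNReal.ofReal (1-v))^i * (ENNReal.ofReal v)^(n-i) := by
  unfold gpoly
  rw [ENNReal.ofReal_sum_of_nonneg (fun j _ => mul_nonneg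
    (mul_nonneg (by positivity) (by positivity)) (pow_nonneg (by linarith) _))]
  have hterm : ∀ j ∈ Finset.Icc a n, ENNReal.ofReal ((n.choose j : ℝ) * v^j * (1-v)^(n-j)) =
      (n.choose j : ℝ≥0∞) * (ENNReal.ofReal v)^j * (ENNReal.ofReal (1-v))^(n-j) := by
    intro j _
    rw [ENNReal.ofReal_mul (by positivity), ENNReal.ofReal_mul (by positivity),
      ENNReal.ofReal_pow h0, ENNReal.ofReal_pow (by linarith), ENNReal.ofReal_natCast]
  rw [Finset.sum_congr rfl hterm]
  refine Finset.sum_nbij' (fun j => n - j) (fun i => n - i) ?_ ?_ ?_ ?_ ?_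
  · intro j hj
    obtain ⟨h1, h2⟩ := Finset.mem_Icc.1 hj
    simp only [Finset.mem_range]
    omega
  · intro i hi
    have := Finset.mem_range.1 hi
    simp only [Finset.mem_Icc]
    omega
  · intro j hj
    obtain ⟨h1, h2⟩ := Finset.mem_Icc.1 hj
    omega
  · intro i hi
    have := Finset.mem_range.1 hi
    omega
  · intro j hj
    obtain ⟨hja, hjn⟩ := Finset.mem_Icc.1 hj
    have hsym : n.choose (n - j) = n.choose j := Nat.choose_symm hjn
    have he : n - (n - j) = j := by omega
    rw [hsym, he]
    ring

lemma setEq (n aa : ℕ) (t : ℝ) (ha : (aa : ℝ) = ⌊((n:ℝ) + 1) * t⌋) (ha1 : 1 ≤ aa)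
    (han : aa ≤ n) (T : Fin n → ℝ) :
    {x : ℝ | ((1 + (Finset.univ.filter (fun j : Fin n => x ≤ T j)).card : ℝ) / (n + 1)) ≤ t}
      = Set.Ioi (kth n (n+1-aa) T) := by
  have haz : (aa : ℤ) = ⌊((n:ℝ) + 1) * t⌋ := by exact_mod_cast ha
  ext x
  simp only [Set.mem_setOf_eq, Set.mem_Ioi]
  have hkth := kth_lt_iff (n := n) (k := n+1-aa) (by omega) (by omega) T id monotone_id x
  simp only [id_eq] at hkth
  rw [hkth]
  have hsum : (Finset.univ.filter (fun j : Fin n => x ≤ T j)).card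
      + (Finset.univ.filter (fun j : Fin n => T j < x)).card = n := by
    have := Finset.card_filter_add_card_filter_not
      (s := (Finset.univ : Finset (Fin n))) (p := fun j => x ≤ T j)
    rw [Finset.card_univ, Fintype.card_fin] at this
    have hfeq : Finset.filter (fun j => ¬ x ≤ T j) Finset.univ
        = Finset.filter (fun j : Fin n => T j < x) Finset.univ :=
      Finset.filter_congr (fun j _ => by simp [not_le])
    rw [hfeq] at this
    exact this
  set cge := (Finset.univ.filter (fun j : Fin n => x ≤ T j)).card with hcge
  set clt := (Finset.univ.filter (fun j : Fin n => T j < x)).card with hclt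
  have hpos : (0:ℝ) < (n:ℝ) + 1 := by positivity
  constructor
  · intro h
    have h2 : (1:ℝ) + cge ≤ ((n:ℝ)+1) * t := by
      rw [div_le_iff₀ hpos] at h
      linarith
    have h3 : (1 + cge : ℤ) ≤ ⌊((n:ℝ)+1)*t⌋ := Int.le_floor.2 (by push_cast; linarith)
    rw [← haz] at h3
    have h4 : 1 + cge ≤ aa := by exact_mod_cast h3
    omega
  · intro h
    have h4 : 1 + cge ≤ aa := by omega
    rw [div_le_iff₀ hpos]
    have h3 : (1 + cge : ℤ) ≤ (aa : ℤ) := by exact_mod_cast h4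
    rw [haz] at h3
    have := Int.le_floor.1 h3
    push_cast at this
    linarith

open Classical in
lemma lhsIic (n a : ℕ) (ν : Measure ℝ) [IsProbabilityMeasure ν] (hcont : ∀ x : ℝ, ν {x} = 0)
    (ha1 : 1 ≤ a) (han : a ≤ n) {q : ℝ} (hq : 0 ≤ q) :
    (Measure.pi fun _ : Fin n => ν)
        {T : Fin n → ℝ | (ν (Set.Ioi (kth n (n+1-a) T))).toReal ≤ q}
      = ∑ i ∈ Finset.range (n-a+1), (n.choose i : ℝ≥0∞) *
          (ENNReal.ofReal (1 - min q 1))^i * (ENNReal.ofReal (min q 1))^(n-i) := by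
  set p := min q 1 with hpdef
  have hp0 : 0 ≤ p := le_min hq zero_le_one
  have hp1 : p ≤ 1 := min_le_right _ _
  set F := fun y => (ν (Set.Iic y)).toReal with hFdef
  set A := {y : ℝ | F y < 1 - q} with hAdef
  have hAmeas : MeasurableSet A := (Fmono ν).measurable measurableSet_Iio
  have hevent : {T : Fin n → ℝ | (ν (Set.Ioi (kth n (n+1-a) T))).toReal ≤ q}
      = {T : Fin n → ℝ | (Finset.univ.filter (fun j => T j ∈ A)).card ≤ (n+1-a) - 1} := by
    ext T
    simp only [Set.mem_setOf_eq]
    set c := kth n (n+1-a) T with hcdef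
    have hpart := measure_add_measure_compl (μ := ν) (measurableSet_Iic (a := c))
    rw [Set.compl_Iic, measure_univ] at hpart
    have htr := congrArg ENNReal.toReal hpart
    rw [ENNReal.toReal_add (measure_ne_top ν _) (measure_ne_top ν _), ENNReal.toReal_one] at htr
    have hiff := kth_lt_iff (n := n) (k := n+1-a) (by omega) (by omega) T F (Fmono ν) (1 - q)
    have hfeq : Finset.univ.filter (fun j => T j ∈ A)
        = Finset.univ.filter (fun j : Fin n => F (T j) < 1 - q) :=
      Finset.filter_congr (fun j _ => by simp [hAdef])
    rw [hfeq]
    constructor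
    · intro hGq
      by_contra hcard
      have hk : n+1-a ≤ (Finset.univ.filter (fun j : Fin n => F (T j) < 1 - q)).card := by
        omega
      have := hiff.2 hk
      rw [← hcdef] at this
      have hFc : F c < 1 - q := this
      linarith
    · intro hcard
      have hnk : ¬ (n+1-a ≤ (Finset.univ.filter (fun j : Fin n => F (T j) < 1 - q)).card) := by
        omega
      have hFc : ¬ (F c < 1 - q) := fun hlt => hnk (hiff.1 hlt)
      push_neg at hFc
      linarith
  rw [hevent, binomLeCount n ν hAmeas ((n+1-a)-1)]
  have hrange : (n+1-a)-1+1 = n-a+1 := by omega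
  rw [hrange]
  have hA : ν A = ENNReal.ofReal (1 - p) := by
    by_cases hq1 : q ≤ 1
    · have hpq : p = q := min_eq_left hq1
      rw [hpq]
      exact measA hcont (by linarith) (by linarith)
    · have hpe : p = 1 := min_eq_right (by linarith)
      have hAempty : A = (∅ : Set ℝ) := by
        ext y
        simp only [hAdef, Set.mem_setOf_eq, Set.mem_empty_iff_false, iff_false, not_lt]
        have : (0:ℝ) ≤ F y := ENNReal.toReal_nonneg
        linarith
      rw [hAempty, measure_empty, hpe]
      simp
  have hAc : ν Aᶜ = ENNReal.ofReal p := by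
    rw [measure_compl hAmeas (measure_ne_top ν _), measure_univ, hA]
    have : ENNReal.ofReal p = ENNReal.ofReal (1 - (1 - p)) := by ring_nf
    rw [this, ENNReal.ofReal_sub _ (by linarith : (0:ℝ) ≤ 1 - p), ENNReal.ofReal_one]
  rw [hA, hAc]

/-- The conditional probability, given i.i.d. continuous calibration scores T₁,...,Tₙ,
that the conformal p-value of a fresh i.i.d. test score is at most t, is distributed
as Beta(a, n+1−a) where a = ⌊(n+1)t⌋. -/
theorem stmt16 (n : ℕ) (ν : Measure ℝ) [IsProbabilityMeasure ν]
    (hcont : ∀ x : ℝ, ν {x} = 0)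
    (t : ℝ) (ht : t ∈ Set.Icc (0:ℝ) 1)
    (a : ℕ) (ha : (a : ℝ) = ⌊(n + 1 : ℝ) * t⌋) (ha1 : 1 ≤ a) (han : a ≤ n) :
    (Measure.pi (fun _ : Fin n => ν)).map
        (fun T : Fin n → ℝ =>
          (ν {x | ((1 + (Finset.univ.filter (fun j : Fin n => x ≤ T j)).card : ℝ)
              / (n + 1)) ≤ t}).toReal)
      = betaMeasure a (n + 1 - a) := by
  have hfun : (fun T : Fin n → ℝ =>
        (ν {x | ((1 + (Finset.univ.filter (fun j : Fin n => x ≤ T j)).card : ℝ)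
            / (n + 1)) ≤ t}).toReal)
      = fun T => (ν (Set.Ioi (kth n (n+1-a) T))).toReal := by
    funext T
    rw [setEq n a t ha ha1 han T]
  rw [hfun]
  have hmeas : Measurable (fun T : Fin n → ℝ => (ν (Set.Ioi (kth n (n+1-a) T))).toReal) := by
    have h1 : Measurable (fun y : ℝ => (ν (Set.Ioi y)).toReal) :=
      Antitone.measurable (fun y z hyz => ENNReal.toReal_mono (measure_ne_top ν _)
        (measure_mono (Set.Ioi_subset_Ioi hyz)))
    exact h1.comp (measurable_kth n (n+1-a))
  haveI : IsProbabilityMeasure ((Measure.pi fun _ : Fin n => ν).map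
      (fun T => (ν (Set.Ioi (kth n (n+1-a) T))).toReal)) :=
    Measure.isProbabilityMeasure_map hmeas.aemeasurable
  refine Measure.ext_of_Iic _ _ (fun q => ?_)
  rw [Measure.map_apply hmeas measurableSet_Iic]
  rcases lt_or_ge q 0 with hq | hq
  · have hempty : ((fun T : Fin n → ℝ => (ν (Set.Ioi (kth n (n+1-a) T))).toReal)
        ⁻¹' Set.Iic q) = ∅ := by
      ext T
      simp only [Set.mem_preimage, Set.mem_Iic, Set.mem_empty_iff_false, iff_false, not_le]
      exact lt_of_lt_of_le hq ENNReal.toReal_nonneg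
    rw [hempty, measure_empty, betaIic_neg n a hq]
  · have hpre : ((fun T : Fin n → ℝ => (ν (Set.Ioi (kth n (n+1-a) T))).toReal)
        ⁻¹' Set.Iic q) = {T : Fin n → ℝ | (ν (Set.Ioi (kth n (n+1-a) T))).toReal ≤ q} := rfl
    rw [hpre, lhsIic n a ν hcont ha1 han hq, betaIic_nonneg n a ha1 han hq,
      bridge n a ha1 han (le_min hq zero_le_one) (min_le_right q 1)]
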